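/- Let G = (V, E) be a finite graph with n vertices and m edges, set M = m + 1, and define L(β) = M·Σ_{j∈V}(|β_j|_2 + |β_j − 1|_2) + Σ_{(u,v)∈E} |β_u + β_v − 1|_2 for β : V → ℚ. If there exists a vertex k with |β_k|_2 > 1 or |β_k − 1|_2 > 1, then L(β) ≥ M·(n + 1); in particular β does not minimize L, since the all-zeros assignment achieves loss M·n + m < M·(n+1). -/
import Mathlib

lemma stmt7_aux_one (a : ℚ) : 1 ≤ padicNorm 2 a + padicNorm 2 (a - 1) := by
  have h1 : padicNorm 2 (a + (1 - a)) ≤ max (padicNorm 2 a) (padicNorm 2 (1 - a)) :=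
    padicNorm.nonarchimedean
  have e : a + (1 - a) = 1 := by ring
  have e2 : (1 - a) = -(a - 1) := by ring
  rw [e, padicNorm.one, e2, padicNorm.neg] at h1
  have ha := padicNorm.nonneg (p := 2) a
  have hb := padicNorm.nonneg (p := 2) (a - 1)
  exact h1.trans (max_le (by linarith) (by linarith))

lemma stmt7_aux_two (a : ℚ) (h : 1 < padicNorm 2 a ∨ 1 < padicNorm 2 (a - 1)) :
    2 ≤ padicNorm 2 a + padicNorm 2 (a - 1) := by
  rcases h with h | h
  · have hne : padicNorm 2 a ≠ padicNorm 2 (-1 : ℚ) := by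
      rw [padicNorm.neg, padicNorm.one]; exact ne_of_gt h
    have := padicNorm.add_eq_max_of_ne hne
    rw [padicNorm.neg, padicNorm.one] at this
    have hmax : max (padicNorm 2 a) 1 = padicNorm 2 a := max_eq_left h.le
    have : padicNorm 2 (a - 1) = padicNorm 2 a := by
      rw [sub_eq_add_neg, this, hmax]
    linarith
  · have hne : padicNorm 2 (a - 1) ≠ padicNorm 2 (1 : ℚ) := by
      rw [padicNorm.one]; exact ne_of_gt h
    have := padicNorm.add_eq_max_of_ne hne
    rw [padicNorm.one, sub_add_cancel] at this
    have hmax : max (padicNorm 2 (a - 1)) 1 = padicNorm 2 (a - 1) := max_eq_left h.le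
    rw [hmax] at this
    linarith

theorem stmt_7 (V : Type) [Fintype V] (E : Finset (V × V)) (β : V → ℚ)
    (M : ℚ) (hM : M = E.card + 1)
    (h : ∃ k : V, 1 < padicNorm 2 (β k) ∨ 1 < padicNorm 2 (β k - 1)) :
    M * (Fintype.card V + 1) ≤
      M * ∑ j : V, (padicNorm 2 (β j) + padicNorm 2 (β j - 1)) +
        ∑ e ∈ E, padicNorm 2 (β e.1 + β e.2 - 1) ∧
    M * (Fintype.card V) + E.card < M * (Fintype.card V + 1) := by
  classical
  obtain ⟨k, hk⟩ := h
  have hMpos : 0 < M := by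
    rw [hM]; positivity
  set f : V → ℚ := fun j => padicNorm 2 (β j) + padicNorm 2 (β j - 1) with hf
  have hcard : 1 ≤ Fintype.card V := Fintype.card_pos_iff.mpr ⟨k⟩
  have hsum : (Fintype.card V : ℚ) + 1 ≤ ∑ j : V, f j := by
    rw [← Finset.add_sum_erase _ f (Finset.mem_univ k)]
    have h1 : (2 : ℚ) ≤ f k := stmt7_aux_two (β k) hk
    have h2 : ((Finset.univ.erase k).card : ℚ) ≤ ∑ j ∈ Finset.univ.erase k, f j := by
      have := Finset.card_nsmul_le_sum (Finset.univ.erase k) f 1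
        (fun i _ => stmt7_aux_one (β i))
      simpa using this
    have h3 : (Finset.univ.erase k).card = Fintype.card V - 1 := by
      rw [Finset.card_erase_of_mem (Finset.mem_univ k), Finset.card_univ]
    rw [h3] at h2
    have h4 : ((Fintype.card V - 1 : ℕ) : ℚ) = (Fintype.card V : ℚ) - 1 := by
      push_cast [hcard]; ring
    rw [h4] at h2
    linarith
  have hedge : 0 ≤ ∑ e ∈ E, padicNorm 2 (β e.1 + β e.2 - 1) :=
    Finset.sum_nonneg fun e _ => padicNorm.nonneg _
  constructor
  · have := mul_le_mul_of_nonneg_left hsum hMpos.le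
    linarith
  · have hE : (E.card : ℚ) < M := by rw [hM]; linarith
    have : M * ((Fintype.card V : ℚ) + 1) = M * Fintype.card V + M := by ring
    linarith
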